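/- With A_w as in the Cartan matrix of w for G₂ (rows (0,3,−2,3,−2), (0,0,1,−2,1), (0,0,0,3,−2), (0,0,0,0,1), (0,0,0,0,0)), the value T_{A_w}[(x_1x_2x_3 + x_1x_2x_5 + x_1x_4x_5 + x_3x_4x_5)(x_2x_3 + x_2x_5 + x_4x_5)] equals 1. -/

import Mathlib

open MvPolynomial

/-- One elimination step of the triangular operator: writing `f = Σ_r h_r · x_k^r`
(`x_k` the last variable), it returns `Σ_{r ≥ 1} h_r · (a_{1,k}x_1 + ⋯ + a_{k-1,k}x_{k-1})^{r-1}`. -/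
noncomputable def triStep (k : ℕ) (A : ℕ → ℕ → ℤ) (f : MvPolynomial (Fin (k + 1)) ℤ) :
    MvPolynomial (Fin k) ℤ :=
  f.support.sum fun m =>
    if m (Fin.last k) = 0 then 0
    else
      MvPolynomial.C (f.coeff m) *
        MvPolynomial.monomial (Finsupp.equivFunOnFinite.symm fun i : Fin k => m (Fin.castSucc i)) 1 *
        (∑ i : Fin k, MvPolynomial.C (A i k) * MvPolynomial.X i) ^ (m (Fin.last k) - 1)

/-- The triangular operator `T_A` of Definition 2, associated to a strictly upper
triangular integer matrix `A = (a_{i,j})` (indexed here from `0`). -/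
noncomputable def Tri : (k : ℕ) → (A : ℕ → ℕ → ℤ) → MvPolynomial (Fin k) ℤ → ℤ
  | 0, _, f => f.coeff 0
  | (k + 1), A, f => Tri k A (triStep k A f)

/-- The Cartan matrix `A_w` of `w = σ_{β₂}σ_{β₁}σ_{β₂}σ_{β₁}σ_{β₂}` in `G₂`. -/
def Aw : ℕ → ℕ → ℤ := fun i j =>
  (([[0, 3, -2, 3, -2], [0, 0, 1, -2, 1], [0, 0, 0, 3, -2],
     [0, 0, 0, 0, 1], [0, 0, 0, 0, 0]] : List (List ℤ)).getD i []).getD j 0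


abbrev MRep (k : ℕ) := List (ℤ × (Fin k → ℕ))

def mulRep {k : ℕ} (a b : MRep k) : MRep k :=
  a.flatMap fun p => b.map fun q => (p.1 * q.1, p.2 + q.2)

def powRep {k : ℕ} (l : MRep k) : ℕ → MRep k
  | 0 => [(1, fun _ => 0)]
  | n + 1 => mulRep l (powRep l n)

def linRep (k : ℕ) (A : ℕ → ℕ → ℤ) : MRep k :=
  (List.finRange k).map fun i : Fin k => ((A i k : ℤ), (Pi.single i 1 : Fin k → ℕ))

def stepRep (k : ℕ) (A : ℕ → ℕ → ℤ) (l : MRep (k + 1)) : MRep k :=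
  l.flatMap fun p =>
    if p.2 (Fin.last k) = 0 then []
    else mulRep [(p.1, fun i => p.2 (Fin.castSucc i))]
      (powRep (linRep k A) (p.2 (Fin.last k) - 1))

noncomputable def toPoly {k : ℕ} (l : MRep k) : MvPolynomial (Fin k) ℤ :=
  (l.map fun p => C p.1 * monomial (Finsupp.equivFunOnFinite.symm p.2) 1).sum

lemma toPoly_nil {k} : toPoly ([] : MRep k) = 0 := rfl

lemma toPoly_cons {k} (p : ℤ × (Fin k → ℕ)) (l : MRep k) :
    toPoly (p :: l) = C p.1 * monomial (Finsupp.equivFunOnFinite.symm p.2) 1 + toPoly l := by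
  simp [toPoly]

lemma toPoly_append {k} (a b : MRep k) : toPoly (a ++ b) = toPoly a + toPoly b := by
  simp [toPoly]

lemma equiv_symm_add {k : ℕ} (e f : Fin k → ℕ) :
    (Finsupp.equivFunOnFinite.symm (e + f)) =
      Finsupp.equivFunOnFinite.symm e + Finsupp.equivFunOnFinite.symm f := by
  ext i; simp

lemma toPoly_term_mul {k} (p : ℤ × (Fin k → ℕ)) (b : MRep k) :
    toPoly (b.map fun q => (p.1 * q.1, p.2 + q.2)) =
      C p.1 * monomial (Finsupp.equivFunOnFinite.symm p.2) 1 * toPoly b := by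
  induction b with
  | nil => simp [toPoly]
  | cons q b ihb =>
    rw [List.map_cons, toPoly_cons, toPoly_cons, mul_add, ← ihb]
    congr 1
    rw [equiv_symm_add, C_mul, mul_mul_mul_comm, monomial_mul, mul_one]

lemma toPoly_mulRep {k} (a b : MRep k) : toPoly (mulRep a b) = toPoly a * toPoly b := by
  induction a with
  | nil => simp [mulRep, toPoly]
  | cons p a ih =>
    rw [toPoly_cons]
    have h : mulRep (p :: a) b = (b.map fun q => (p.1 * q.1, p.2 + q.2)) ++ mulRep a b := by
      simp [mulRep]
    rw [h, toPoly_append, ih, add_mul, toPoly_term_mul]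

lemma toPoly_one {k : ℕ} : toPoly ([(1, fun _ => 0)] : MRep k) = 1 := by
  have h : (Finsupp.equivFunOnFinite.symm (fun _ => 0 : Fin k → ℕ)) = 0 := by ext i; simp
  simp [toPoly, h]

lemma toPoly_powRep {k} (l : MRep k) (n : ℕ) : toPoly (powRep l n) = toPoly l ^ n := by
  induction n with
  | zero => simp [powRep, toPoly_one]
  | succ n ih => rw [powRep, toPoly_mulRep, ih, pow_succ]; ring

lemma toPoly_linRep (k : ℕ) (A : ℕ → ℕ → ℤ) :
    toPoly (linRep k A) = ∑ i : Fin k, C (A i k) * X i := by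
  rw [Fin.sum_univ_def, linRep, toPoly, List.map_map]
  congr 1
  apply List.map_congr_left
  intro i _
  have h : (Finsupp.equivFunOnFinite.symm (Pi.single i 1 : Fin k → ℕ)) = Finsupp.single i 1 := by
    ext j; simp [Pi.single_apply, Finsupp.single_apply, eq_comm]
  simp [Function.comp, h, X, monomial_mul]

lemma triStep_monomial (k : ℕ) (A : ℕ → ℕ → ℤ) (m : Fin (k+1) →₀ ℕ) (c : ℤ) :
    triStep k A (monomial m c) =
      if m (Fin.last k) = 0 then 0
      else C c * monomial (Finsupp.equivFunOnFinite.symm fun i : Fin k => m (Fin.castSucc i)) 1 *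
        (∑ i : Fin k, C (A i k) * X i) ^ (m (Fin.last k) - 1) := by
  classical
  unfold triStep
  by_cases hc : c = 0
  · simp [hc]
  · rw [support_monomial, if_neg hc, Finset.sum_singleton, coeff_monomial, if_pos rfl]

lemma triStep_add (k : ℕ) (A : ℕ → ℕ → ℤ) (f g : MvPolynomial (Fin (k+1)) ℤ) :
    triStep k A (f + g) = triStep k A f + triStep k A g := by
  classical
  have key : ∀ f : MvPolynomial (Fin (k+1)) ℤ, triStep k A f =
      Finsupp.sum (AddMonoidAlgebra.coeff f) fun m c =>
        if m (Fin.last k) = 0 then 0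
        else C c * monomial (Finsupp.equivFunOnFinite.symm fun i : Fin k => m (Fin.castSucc i)) 1 *
          (∑ i : Fin k, C (A i k) * X i) ^ (m (Fin.last k) - 1) := by
    intro f; rfl
  rw [key, key, key, AddMonoidAlgebra.coeff_add, Finsupp.sum_add_index']
  · intro m; split <;> simp
  · intro m c d; split <;> simp [C_add]; ring

lemma triStep_zero (k : ℕ) (A : ℕ → ℕ → ℤ) : triStep k A 0 = 0 := by
  unfold triStep
  simp

lemma triStep_toPoly (k : ℕ) (A : ℕ → ℕ → ℤ) (l : MRep (k + 1)) :
    triStep k A (toPoly l) = toPoly (stepRep k A l) := by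
  induction l with
  | nil => rw [toPoly_nil, triStep_zero]; rfl
  | cons p l ih =>
    have hstep : stepRep k A (p :: l) =
        (if p.2 (Fin.last k) = 0 then []
         else mulRep [(p.1, fun i => p.2 (Fin.castSucc i))]
           (powRep (linRep k A) (p.2 (Fin.last k) - 1))) ++ stepRep k A l := by
      simp [stepRep]
    rw [toPoly_cons, triStep_add, ih, hstep, toPoly_append]
    congr 1
    rw [C_mul_monomial, mul_one, triStep_monomial]
    simp only [Finsupp.coe_equivFunOnFinite_symm]
    split_ifs
    · simp [*, toPoly_nil]
    · rw [toPoly_mulRep, toPoly_powRep, toPoly_linRep, toPoly_cons, toPoly_nil, add_zero]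
      simp [*]

def runRep : (k : ℕ) → (ℕ → ℕ → ℤ) → MRep k → ℤ
  | 0, _, l => (l.map Prod.fst).sum
  | k + 1, A, l => runRep k A (stepRep k A l)

lemma Tri_eq_runRep : ∀ (k : ℕ) (A : ℕ → ℕ → ℤ) (l : MRep k),
    Tri k A (toPoly l) = runRep k A l := by
  intro k
  induction k with
  | zero =>
    intro A l
    show (toPoly l).coeff 0 = (l.map Prod.fst).sum
    induction l with
    | nil => simp [toPoly]
    | cons p l ih =>
      rw [toPoly_cons, coeff_add, ih, List.map_cons, List.sum_cons]
      congr 1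
      have h0 : (Finsupp.equivFunOnFinite.symm p.2 : Fin 0 →₀ ℕ) = 0 := Subsingleton.elim _ _
      rw [h0, monomial_zero', C_1, mul_one, coeff_C]
      simp
  | succ k ih =>
    intro A l
    show Tri k A (triStep k A (toPoly l)) = runRep k A (stepRep k A l)
    rw [triStep_toPoly, ih]

lemma monomial_symm_eq (e : Fin 5 → ℕ) :
    (monomial (Finsupp.equivFunOnFinite.symm e) (1 : ℤ)) = ∏ i, X i ^ e i := by
  rw [monomial_eq, C_1, one_mul, Finsupp.prod_fintype]
  · simp
  · intro i; rfl

/-- Example 3: `T_{A_w}[(x₁x₂x₃ + x₁x₂x₅ + x₁x₄x₅ + x₃x₄x₅) ·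
(x₂x₃ + x₂x₅ + x₄x₅)] = 1`  (variables `x_1,…,x_5` are `X 0,…,X 4`). -/
theorem triangular_operator_Aw_structure_constant :
    Tri 5 Aw
      ((MvPolynomial.X 0 * MvPolynomial.X 1 * MvPolynomial.X 2 +
        MvPolynomial.X 0 * MvPolynomial.X 1 * MvPolynomial.X 4 +
        MvPolynomial.X 0 * MvPolynomial.X 3 * MvPolynomial.X 4 +
        MvPolynomial.X 2 * MvPolynomial.X 3 * MvPolynomial.X 4) *
       (MvPolynomial.X 1 * MvPolynomial.X 2 +
        MvPolynomial.X 1 * MvPolynomial.X 4 +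
        MvPolynomial.X 3 * MvPolynomial.X 4)) = 1 := by
  have h : (MvPolynomial.X 0 * MvPolynomial.X 1 * MvPolynomial.X 2 +
        MvPolynomial.X 0 * MvPolynomial.X 1 * MvPolynomial.X 4 +
        MvPolynomial.X 0 * MvPolynomial.X 3 * MvPolynomial.X 4 +
        MvPolynomial.X 2 * MvPolynomial.X 3 * MvPolynomial.X 4) *
       (MvPolynomial.X 1 * MvPolynomial.X 2 +
        MvPolynomial.X 1 * MvPolynomial.X 4 +
        MvPolynomial.X 3 * MvPolynomial.X 4) =
      toPoly (mulRep
        ([(1, ![1,1,1,0,0]), (1, ![1,1,0,0,1]), (1, ![1,0,0,1,1]), (1, ![0,0,1,1,1])] : MRep 5)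
        ([(1, ![0,1,1,0,0]), (1, ![0,1,0,0,1]), (1, ![0,0,0,1,1])] : MRep 5)) := by
    rw [toPoly_mulRep]
    simp only [toPoly, List.map_cons, List.map_nil, List.sum_cons, List.sum_nil,
      monomial_symm_eq, C_1, one_mul, Fin.prod_univ_five]
    norm_num [Matrix.cons_val_two, Matrix.cons_val_three, Matrix.cons_val_four]
    ring
  rw [h, Tri_eq_runRep]
  decide
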